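/- If a permutation w of {1,…,n} avoids the patterns 2413, 2431, 3142 and 4132, then w is a direct sum of 132-avoiding permutations: there exist k ≥ 1 and permutations w^1,…,w^k, each avoiding the pattern 132, with w = w^1 ⊕ ⋯ ⊕ w^k. -/

import Mathlib

/-- The Rothe diagram of a permutation of `{0, …, n-1}` (0-based indexing):
cell `(i,j)` belongs to the diagram iff `j < w i` and `i < w⁻¹ j`. -/
def rothe {n : ℕ} (w : Equiv.Perm (Fin n)) : Finset (Fin n × Fin n) :=
  Finset.univ.filter fun c => c.2 < w c.1 ∧ c.1 < w⁻¹ c.2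

/-- `ℓ(w)`: the number of inversions of `w`. -/
def plen {n : ℕ} (w : Equiv.Perm (Fin n)) : ℕ :=
  (Finset.univ.filter fun p : Fin n × Fin n => p.1 < p.2 ∧ w p.2 < w p.1).card

/-- A standard Rothe tableau of `w`: a labelling of the cells of the Rothe diagram by
`1, …, ℓ(w)` (bijectively), strictly increasing along rows and columns; the labelling
is recorded as a function on all of `Fin n × Fin n` that vanishes off the diagram. -/
def IsSRT {n : ℕ} (w : Equiv.Perm (Fin n)) (T : Fin n × Fin n → ℕ) : Prop :=
  Set.BijOn T ↑(rothe w) (Set.Icc 1 (plen w)) ∧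
  (∀ c, c ∉ rothe w → T c = 0) ∧
  (∀ c ∈ rothe w, ∀ c' ∈ rothe w, c.1 = c'.1 → c.2 < c'.2 → T c < T c') ∧
  (∀ c ∈ rothe w, ∀ c' ∈ rothe w, c.2 = c'.2 → c.1 < c'.1 → T c < T c')

noncomputable def srtCard {n : ℕ} (w : Equiv.Perm (Fin n)) : ℕ :=
  Nat.card {T : Fin n × Fin n → ℕ // IsSRT w T}

/-- The hook of a cell of the Rothe diagram. -/
def hook {n : ℕ} (w : Equiv.Perm (Fin n)) (c : Fin n × Fin n) : Finset (Fin n × Fin n) :=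
  (rothe w).filter fun d => (d.1 = c.1 ∧ c.2 ≤ d.2) ∨ (d.2 = c.2 ∧ c.1 ≤ d.1)

/-- A balanced Rothe tableau of `w`. -/
def IsBRT {n : ℕ} (w : Equiv.Perm (Fin n)) (T : Fin n × Fin n → ℕ) : Prop :=
  Set.BijOn T ↑(rothe w) (Set.Icc 1 (plen w)) ∧
  (∀ c, c ∉ rothe w → T c = 0) ∧
  ∀ c ∈ rothe w,
    ((hook w c).filter fun d => T d < T c).card
      = ((rothe w).filter fun d => d.1 = c.1 ∧ c.2 < d.2).card

noncomputable def brtCard {n : ℕ} (w : Equiv.Perm (Fin n)) : ℕ :=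
  Nat.card {T : Fin n × Fin n → ℕ // IsBRT w T}

/-- `w` contains the pattern `p`. -/
def ContainsPattern {n k : ℕ} (w : Equiv.Perm (Fin n)) (p : Equiv.Perm (Fin k)) : Prop :=
  ∃ f : Fin k → Fin n, StrictMono f ∧ ∀ s t : Fin k, w (f s) < w (f t) ↔ p s < p t

/-- The pattern 2413 (0-based one-line notation `1 3 0 2`). -/
def p2413 : Equiv.Perm (Fin 4) :=
  ⟨![1,3,0,2], ![2,0,3,1], by intro x; fin_cases x <;> rfl, by intro x; fin_cases x <;> rfl⟩

def p2431 : Equiv.Perm (Fin 4) :=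
  ⟨![1,3,2,0], ![3,0,2,1], by intro x; fin_cases x <;> rfl, by intro x; fin_cases x <;> rfl⟩

def p3142 : Equiv.Perm (Fin 4) :=
  ⟨![2,0,3,1], ![1,3,0,2], by intro x; fin_cases x <;> rfl, by intro x; fin_cases x <;> rfl⟩

def p4132 : Equiv.Perm (Fin 4) :=
  ⟨![3,0,2,1], ![1,3,2,0], by intro x; fin_cases x <;> rfl, by intro x; fin_cases x <;> rfl⟩

def p4213 : Equiv.Perm (Fin 4) :=
  ⟨![3,1,0,2], ![2,1,3,0], by intro x; fin_cases x <;> rfl, by intro x; fin_cases x <;> rfl⟩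

def p3241 : Equiv.Perm (Fin 4) :=
  ⟨![2,1,3,0], ![3,1,0,2], by intro x; fin_cases x <;> rfl, by intro x; fin_cases x <;> rfl⟩

def p132 : Equiv.Perm (Fin 3) :=
  ⟨![0,2,1], ![0,2,1], by intro x; fin_cases x <;> rfl, by intro x; fin_cases x <;> rfl⟩

/-- The adjacent transposition `s_a` (0-based: swaps `a` and `a+1`), as a permutation
of `Fin n`; it is the identity when `a+1 ≥ n`. -/
def adjT (n a : ℕ) : Equiv.Perm (Fin n) :=
  if h : a + 1 < n then Equiv.swap ⟨a, Nat.lt_of_succ_lt h⟩ ⟨a + 1, h⟩ else 1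

/-- Reduced words of `w`, written with 0-based letters `a` (`0 ≤ a ≤ n-2`). -/
def IsReducedWord {n : ℕ} (w : Equiv.Perm (Fin n)) (L : List ℕ) : Prop :=
  (∀ a ∈ L, a + 1 < n) ∧ (L.map (adjT n)).prod = w ∧ L.length = plen w

noncomputable def rwCard {n : ℕ} (w : Equiv.Perm (Fin n)) : ℕ :=
  Nat.card {L : List ℕ // IsReducedWord w L}

/-- Direct sum of two permutations. -/
def dsum {k m : ℕ} (u : Equiv.Perm (Fin k)) (v : Equiv.Perm (Fin m)) :
    Equiv.Perm (Fin (k + m)) :=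
  finSumFinEquiv.permCongr (Equiv.sumCongr u v)

def dsumSig (p q : Σ m : ℕ, Equiv.Perm (Fin m)) : Σ m : ℕ, Equiv.Perm (Fin m) :=
  ⟨p.1 + q.1, dsum p.2 q.2⟩

/-- The direct sum `w¹ ⊕ w² ⊕ ⋯ ⊕ wᵏ` of a list of permutations. -/
def dsumList (l : List (Σ m : ℕ, Equiv.Perm (Fin m))) : Σ m : ℕ, Equiv.Perm (Fin m) :=
  l.foldr dsumSig ⟨0, 1⟩

/-- `w` is decomposable if it maps `{0,…,k-1}` onto itself for some `0 < k < n`. -/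
def Decomposable {n : ℕ} (w : Equiv.Perm (Fin n)) : Prop :=
  ∃ k : ℕ, 0 < k ∧ k < n ∧ ∀ i : Fin n, (i : ℕ) < k → ((w i : ℕ)) < k

/-- The Lehmer code of `w`. -/
def lehmer {n : ℕ} (w : Equiv.Perm (Fin n)) (i : Fin n) : ℕ :=
  (Finset.univ.filter fun j : Fin n => i < j ∧ w j < w i).card

/-- The cells of the Young diagram of `lam`. -/
def yCells {m : ℕ} (lam : Fin m → ℕ) : Set (Fin m × ℕ) :=
  {c | c.2 < lam c.1}

/-- A standard Young tableau of shape `lam`. -/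
def IsSYT {m : ℕ} (lam : Fin m → ℕ) (T : Fin m × ℕ → ℕ) : Prop :=
  Set.BijOn T (yCells lam) (Set.Icc 1 (∑ i, lam i)) ∧
  (∀ c, c ∉ yCells lam → T c = 0) ∧
  (∀ c ∈ yCells lam, ∀ c' ∈ yCells lam, c.1 = c'.1 → c.2 < c'.2 → T c < T c') ∧
  (∀ c ∈ yCells lam, ∀ c' ∈ yCells lam, c.2 = c'.2 → c.1 < c'.1 → T c < T c')

/-- `f^λ`: the number of standard Young tableaux of shape `lam`. -/
noncomputable def sytCard {m : ℕ} (lam : Fin m → ℕ) : ℕ :=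
  Nat.card {T : Fin m × ℕ → ℕ // IsSYT lam T}

section Aux

variable {n : ℕ}

lemma mk2413 (w : Equiv.Perm (Fin n)) (a b c d : Fin n)
    (hab : a < b) (hbc : b < c) (hcd : c < d)
    (v1 : w c < w a) (v2 : w a < w d) (v3 : w d < w b) :
    ContainsPattern w p2413 := by
  refine ⟨![a,b,c,d], ?_, ?_⟩
  · intro s t hst
    fin_cases s <;> fin_cases t <;>
      first
        | exact absurd hst (by decide)
        | exact hab | exact hbc | exact hcd
        | exact hab.trans hbc | exact hbc.trans hcd
        | exact hab.trans (hbc.trans hcd)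
  · intro s t
    fin_cases s <;> fin_cases t <;>
      first
        | exact iff_of_true v1 (by decide)
        | exact iff_of_true v2 (by decide)
        | exact iff_of_true v3 (by decide)
        | exact iff_of_true (v1.trans v2) (by decide)
        | exact iff_of_true (v2.trans v3) (by decide)
        | exact iff_of_true (v1.trans (v2.trans v3)) (by decide)
        | exact iff_of_false (lt_irrefl _) (by decide)
        | exact iff_of_false (lt_asymm v1) (by decide)
        | exact iff_of_false (lt_asymm v2) (by decide)
        | exact iff_of_false (lt_asymm v3) (by decide)
        | exact iff_of_false (lt_asymm (v1.trans v2)) (by decide)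
        | exact iff_of_false (lt_asymm (v2.trans v3)) (by decide)
        | exact iff_of_false (lt_asymm (v1.trans (v2.trans v3))) (by decide)

lemma mk2431 (w : Equiv.Perm (Fin n)) (a b c d : Fin n)
    (hab : a < b) (hbc : b < c) (hcd : c < d)
    (v1 : w d < w a) (v2 : w a < w c) (v3 : w c < w b) :
    ContainsPattern w p2431 := by
  refine ⟨![a,b,c,d], ?_, ?_⟩
  · intro s t hst
    fin_cases s <;> fin_cases t <;>
      first
        | exact absurd hst (by decide)
        | exact hab | exact hbc | exact hcd
        | exact hab.trans hbc | exact hbc.trans hcd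
        | exact hab.trans (hbc.trans hcd)
  · intro s t
    fin_cases s <;> fin_cases t <;>
      first
        | exact iff_of_true v1 (by decide)
        | exact iff_of_true v2 (by decide)
        | exact iff_of_true v3 (by decide)
        | exact iff_of_true (v1.trans v2) (by decide)
        | exact iff_of_true (v2.trans v3) (by decide)
        | exact iff_of_true (v1.trans (v2.trans v3)) (by decide)
        | exact iff_of_false (lt_irrefl _) (by decide)
        | exact iff_of_false (lt_asymm v1) (by decide)
        | exact iff_of_false (lt_asymm v2) (by decide)
        | exact iff_of_false (lt_asymm v3) (by decide)
        | exact iff_of_false (lt_asymm (v1.trans v2)) (by decide)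
        | exact iff_of_false (lt_asymm (v2.trans v3)) (by decide)
        | exact iff_of_false (lt_asymm (v1.trans (v2.trans v3))) (by decide)

lemma mk3142 (w : Equiv.Perm (Fin n)) (a b c d : Fin n)
    (hab : a < b) (hbc : b < c) (hcd : c < d)
    (v1 : w b < w d) (v2 : w d < w a) (v3 : w a < w c) :
    ContainsPattern w p3142 := by
  refine ⟨![a,b,c,d], ?_, ?_⟩
  · intro s t hst
    fin_cases s <;> fin_cases t <;>
      first
        | exact absurd hst (by decide)
        | exact hab | exact hbc | exact hcd
        | exact hab.trans hbc | exact hbc.trans hcd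
        | exact hab.trans (hbc.trans hcd)
  · intro s t
    fin_cases s <;> fin_cases t <;>
      first
        | exact iff_of_true v1 (by decide)
        | exact iff_of_true v2 (by decide)
        | exact iff_of_true v3 (by decide)
        | exact iff_of_true (v1.trans v2) (by decide)
        | exact iff_of_true (v2.trans v3) (by decide)
        | exact iff_of_true (v1.trans (v2.trans v3)) (by decide)
        | exact iff_of_false (lt_irrefl _) (by decide)
        | exact iff_of_false (lt_asymm v1) (by decide)
        | exact iff_of_false (lt_asymm v2) (by decide)
        | exact iff_of_false (lt_asymm v3) (by decide)
        | exact iff_of_false (lt_asymm (v1.trans v2)) (by decide)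
        | exact iff_of_false (lt_asymm (v2.trans v3)) (by decide)
        | exact iff_of_false (lt_asymm (v1.trans (v2.trans v3))) (by decide)

lemma mk4132 (w : Equiv.Perm (Fin n)) (a b c d : Fin n)
    (hab : a < b) (hbc : b < c) (hcd : c < d)
    (v1 : w b < w d) (v2 : w d < w c) (v3 : w c < w a) :
    ContainsPattern w p4132 := by
  refine ⟨![a,b,c,d], ?_, ?_⟩
  · intro s t hst
    fin_cases s <;> fin_cases t <;>
      first
        | exact absurd hst (by decide)
        | exact hab | exact hbc | exact hcd
        | exact hab.trans hbc | exact hbc.trans hcd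
        | exact hab.trans (hbc.trans hcd)
  · intro s t
    fin_cases s <;> fin_cases t <;>
      first
        | exact iff_of_true v1 (by decide)
        | exact iff_of_true v2 (by decide)
        | exact iff_of_true v3 (by decide)
        | exact iff_of_true (v1.trans v2) (by decide)
        | exact iff_of_true (v2.trans v3) (by decide)
        | exact iff_of_true (v1.trans (v2.trans v3)) (by decide)
        | exact iff_of_false (lt_irrefl _) (by decide)
        | exact iff_of_false (lt_asymm v1) (by decide)
        | exact iff_of_false (lt_asymm v2) (by decide)
        | exact iff_of_false (lt_asymm v3) (by decide)
        | exact iff_of_false (lt_asymm (v1.trans v2)) (by decide)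
        | exact iff_of_false (lt_asymm (v2.trans v3)) (by decide)
        | exact iff_of_false (lt_asymm (v1.trans (v2.trans v3))) (by decide)

lemma extract132 (w : Equiv.Perm (Fin n)) (h : ContainsPattern w p132) :
    ∃ i j l : Fin n, i < j ∧ j < l ∧ w i < w l ∧ w l < w j := by
  obtain ⟨f, hf, hiff⟩ := h
  exact ⟨f 0, f 1, f 2, hf (by decide), hf (by decide),
    (hiff 0 2).mpr (by decide), (hiff 2 1).mpr (by decide)⟩

end Aux
lemma core {n : ℕ} (w : Equiv.Perm (Fin n))
    (h1 : ¬ ContainsPattern w p2413) (h2 : ¬ ContainsPattern w p2431)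
    (h3 : ¬ ContainsPattern w p3142) (h4 : ¬ ContainsPattern w p4132)
    (hc : ContainsPattern w p132) :
    ∃ k : ℕ, 0 < k ∧ k < n ∧ ∀ i : Fin n, (i : ℕ) < k → ((w i : ℕ)) < k := by
  classical
  obtain ⟨i0, j0, l0, hij, hjl, hv1, hv2⟩ := extract132 w hc
  set s : Finset (Fin n) :=
    Finset.univ.filter
      (fun q1 => ∃ q2 q3 : Fin n, q1 < q2 ∧ q2 < q3 ∧ w q1 < w q3 ∧ w q3 < w q2) with hs
  have hsne : s.Nonempty := ⟨i0, by
    simp only [hs, Finset.mem_filter, Finset.mem_univ, true_and]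
    exact ⟨j0, l0, hij, hjl, hv1, hv2⟩⟩
  set q1 := s.max' hsne with hq1def
  have hq1mem : q1 ∈ s := s.max'_mem hsne
  have hq1max : ∀ x ∈ s, x ≤ q1 := fun x hx => s.le_max' x hx
  rw [hs, Finset.mem_filter] at hq1mem
  obtain ⟨-, q2, q3, h12, h23, hw13, hw32⟩ := hq1mem
  obtain ⟨x0, hx0mem, hx0max⟩ :=
    Finset.exists_max_image (Finset.Iic q1) w ⟨q1, Finset.mem_Iic.2 le_rfl⟩
  have hx0le : x0 ≤ q1 := Finset.mem_Iic.1 hx0mem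
  have hmax' : ∀ y : Fin n, y ≤ q1 → w y ≤ w x0 := fun y hy => hx0max y (Finset.mem_Iic.2 hy)
  -- (B) w x0 < w q3
  have hm_b : w x0 < w q3 := by
    rcases eq_or_lt_of_le hx0le with heq | hlt
    · rw [heq]; exact hw13
    · by_contra hge
      push_neg at hge
      have hne3 : w x0 ≠ w q3 := fun h =>
        (ne_of_lt (hlt.trans (h12.trans h23))) (w.injective h)
      have h3lt : w q3 < w x0 := lt_of_le_of_ne hge (Ne.symm hne3)
      have hne2 : w x0 ≠ w q2 := fun h =>
        (ne_of_lt (hlt.trans h12)) (w.injective h)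
      rcases lt_or_gt_of_ne hne2 with hlt2 | hgt2
      · exact h3 (mk3142 w x0 q1 q2 q3 hlt h12 h23 hw13 h3lt hlt2)
      · exact h4 (mk4132 w x0 q1 q2 q3 hlt h12 h23 hw13 hw32 hgt2)
  -- (C) everything right of q1 has value above w x0
  have hbig : ∀ y : Fin n, q1 < y → w x0 < w y := by
    intro y hy
    by_contra hle
    push_neg at hle
    have hyx0 : w y < w x0 := lt_of_le_of_ne hle
      (fun h => (ne_of_lt (lt_of_le_of_lt hx0le hy)) (w.injective h).symm)
    have hyw3 : w y < w q3 := hyx0.trans hm_b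
    have hx0q2 : x0 < q2 := lt_of_le_of_lt hx0le h12
    rcases lt_trichotomy y q2 with hy2 | hy2 | hy2
    · have : y ∈ s := by
        rw [hs, Finset.mem_filter]
        exact ⟨Finset.mem_univ _, q2, q3, hy2, h23, hyw3, hw32⟩
      exact absurd (hq1max y this) (not_le.2 hy)
    · subst hy2
      exact absurd (hm_b.trans hw32) (not_lt.2 hle)
    · rcases lt_trichotomy y q3 with hy3 | hy3 | hy3
      · exact h1 (mk2413 w x0 q2 y q3 hx0q2 hy2 hy3 hyx0 hm_b hw32)
      · subst hy3; exact absurd hm_b (not_lt.2 hle)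
      · exact h2 (mk2431 w x0 q2 q3 y hx0q2 h23 hy3 hyx0 hm_b hw32)
  -- counting
  have hsub : Finset.univ.filter (fun y : Fin n => w y ≤ w x0) ⊆ Finset.Iic q1 := by
    intro y hy
    rw [Finset.mem_filter] at hy
    rw [Finset.mem_Iic]
    by_contra hgt
    exact absurd (hbig y (not_le.1 hgt)) (not_lt.2 hy.2)
  have hcard1 : (Finset.univ.filter (fun y : Fin n => w y ≤ w x0)).card
      = (w x0 : ℕ) + 1 := by
    rw [Finset.card_equiv w (t := Finset.Iic (w x0)) (fun y => by
      simp [Finset.mem_Iic])]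
    exact Fin.card_Iic _
  have hmle : (w x0 : ℕ) ≤ (q1 : ℕ) := by
    have := Finset.card_le_card hsub
    rw [hcard1, Fin.card_Iic] at this
    omega
  refine ⟨(q1 : ℕ) + 1, Nat.succ_pos _, ?_, ?_⟩
  · have : (q1 : ℕ) < (q2 : ℕ) := h12
    have := q2.isLt
    omega
  · intro i hi
    have hiq : i ≤ q1 := by
      rw [Fin.le_def]; omega
    have := hmax' i hiq
    rw [Fin.le_def] at this
    omega
lemma sigma_perm_ext {m n : ℕ} (e : m = n) (p : Equiv.Perm (Fin m)) (q : Equiv.Perm (Fin n))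
    (h : ∀ (i : ℕ) (him : i < m) (hin : i < n), ((p ⟨i, him⟩ : Fin m) : ℕ) = ((q ⟨i, hin⟩ : Fin n) : ℕ)) :
    (⟨m, p⟩ : Σ m : ℕ, Equiv.Perm (Fin m)) = ⟨n, q⟩ := by
  subst e
  congr 1
  exact Equiv.ext fun i => Fin.ext (by simpa using h i i.isLt i.isLt)

lemma dsum_val {k m : ℕ} (u : Equiv.Perm (Fin k)) (v : Equiv.Perm (Fin m)) (i : Fin (k + m)) :
    ((dsum u v i : Fin (k + m)) : ℕ)
      = if h : (i : ℕ) < k then ((u ⟨i, h⟩ : Fin k) : ℕ)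
        else k + ((v ⟨(i : ℕ) - k, by omega⟩ : Fin m) : ℕ) := by
  rw [dsum, Equiv.permCongr_apply]
  split_ifs with h
  · have : i = Fin.castAdd m ⟨(i : ℕ), h⟩ := Fin.ext rfl
    conv_lhs => rw [this, finSumFinEquiv_symm_apply_castAdd]
    simp
  · have : i = Fin.natAdd k ⟨(i : ℕ) - k, by omega⟩ := Fin.ext (by simp; omega)
    conv_lhs => rw [this, finSumFinEquiv_symm_apply_natAdd]
    simp

lemma dsum_val_left {k m : ℕ} (u : Equiv.Perm (Fin k)) (v : Equiv.Perm (Fin m))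
    {i : ℕ} (h : i < k) (h' : i < k + m) :
    ((dsum u v ⟨i, h'⟩ : Fin (k + m)) : ℕ) = ((u ⟨i, h⟩ : Fin k) : ℕ) := by
  rw [dsum_val]
  exact dif_pos h

lemma dsum_val_right {k m : ℕ} (u : Equiv.Perm (Fin k)) (v : Equiv.Perm (Fin m))
    {i : ℕ} (h : k ≤ i) (h' : i < k + m) :
    ((dsum u v ⟨i, h'⟩ : Fin (k + m)) : ℕ) = k + ((v ⟨i - k, by omega⟩ : Fin m) : ℕ) := by
  rw [dsum_val]
  exact dif_neg (Nat.not_lt.2 h)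

lemma dsumSig_zero_right (x : Σ m : ℕ, Equiv.Perm (Fin m)) : dsumSig x ⟨0, 1⟩ = x := by
  obtain ⟨m, p⟩ := x
  show (⟨m + 0, dsum p 1⟩ : Σ m : ℕ, Equiv.Perm (Fin m)) = ⟨m, p⟩
  refine sigma_perm_ext (by omega) _ _ ?_
  intro i him hin
  rw [dsum_val_left p 1 hin him]

lemma dsumSig_zero_left (x : Σ m : ℕ, Equiv.Perm (Fin m)) : dsumSig ⟨0, 1⟩ x = x := by
  obtain ⟨m, p⟩ := x
  show (⟨0 + m, dsum 1 p⟩ : Σ m : ℕ, Equiv.Perm (Fin m)) = ⟨m, p⟩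
  refine sigma_perm_ext (by omega) _ _ ?_
  intro i him hin
  rw [dsum_val_right 1 p (Nat.zero_le _) him]
  simp

lemma dsumSig_assoc (x y z : Σ m : ℕ, Equiv.Perm (Fin m)) :
    dsumSig (dsumSig x y) z = dsumSig x (dsumSig y z) := by
  obtain ⟨a, u⟩ := x; obtain ⟨b, v⟩ := y; obtain ⟨c, t⟩ := z
  show (⟨a + b + c, dsum (dsum u v) t⟩ : Σ m : ℕ, Equiv.Perm (Fin m))
      = ⟨a + (b + c), dsum u (dsum v t)⟩
  refine sigma_perm_ext (Nat.add_assoc a b c) _ _ ?_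
  intro i him hin
  rcases Nat.lt_or_ge i a with h | h
  · rw [dsum_val_left (dsum u v) t (show i < a + b by omega) him,
      dsum_val_left u v h (show i < a + b by omega),
      dsum_val_left u (dsum v t) h hin]
  · rcases Nat.lt_or_ge i (a + b) with h2 | h2
    · rw [dsum_val_left (dsum u v) t h2 him,
        dsum_val_right u v h (show i < a + b by omega),
        dsum_val_right u (dsum v t) h hin,
        dsum_val_left v t (show i - a < b by omega) (show i - a < b + c by omega)]
    · rw [dsum_val_right (dsum u v) t h2 him,
        dsum_val_right u (dsum v t) h hin,
        dsum_val_right v t (show b ≤ i - a by omega) (show i - a < b + c by omega)]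
      rw [show (⟨i - a - b, by omega⟩ : Fin c) = ⟨i - (a + b), by omega⟩ from
        Fin.ext (Nat.sub_sub i a b)]
      omega

lemma dsumList_append (l1 l2 : List (Σ m : ℕ, Equiv.Perm (Fin m))) :
    dsumList (l1 ++ l2) = dsumSig (dsumList l1) (dsumList l2) := by
  induction l1 with
  | nil => simp [dsumList, dsumSig_zero_left]
  | cons a l ih =>
    show dsumSig a (dsumList (l ++ l2)) = dsumSig (dsumSig a (dsumList l)) (dsumList l2)
    rw [ih, dsumSig_assoc]

lemma contains_mono {k n j : ℕ} (u : Equiv.Perm (Fin k)) (w : Equiv.Perm (Fin n))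
    (g : Fin k → Fin n) (hg : StrictMono g)
    (hvals : ∀ s t : Fin k, u s < u t ↔ w (g s) < w (g t))
    (p : Equiv.Perm (Fin j)) (h : ContainsPattern u p) : ContainsPattern w p := by
  obtain ⟨f, hf, hiff⟩ := h
  exact ⟨g ∘ f, hg.comp hf, fun s t => ((hvals (f s) (f t)).symm).trans (hiff s t)⟩
def blockU {n : ℕ} (w : Equiv.Perm (Fin n)) (k : ℕ) (hkn : k < n)
    (hlt : ∀ i : Fin n, (i : ℕ) < k → ((w i : Fin n) : ℕ) < k)
    (hinvlt : ∀ i : Fin n, (i : ℕ) < k → ((w⁻¹ i : Fin n) : ℕ) < k) :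
    Equiv.Perm (Fin k) where
  toFun i := ⟨((w ⟨(i : ℕ), lt_trans i.isLt hkn⟩ : Fin n) : ℕ), hlt _ i.isLt⟩
  invFun i := ⟨((w⁻¹ ⟨(i : ℕ), lt_trans i.isLt hkn⟩ : Fin n) : ℕ), hinvlt _ i.isLt⟩
  left_inv i := Fin.ext (by simp)
  right_inv i := Fin.ext (by simp)

def blockV {n : ℕ} (w : Equiv.Perm (Fin n)) (k : ℕ) (hkn : k < n)
    (hlt : ∀ i : Fin n, (i : ℕ) < k → ((w i : Fin n) : ℕ) < k)
    (hinvlt : ∀ i : Fin n, (i : ℕ) < k → ((w⁻¹ i : Fin n) : ℕ) < k) :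
    Equiv.Perm (Fin (n - k)) where
  toFun i := ⟨((w ⟨k + (i : ℕ), by have := i.isLt; omega⟩ : Fin n) : ℕ) - k, by
    have hb : k + (i : ℕ) < n := by have := i.isLt; omega
    have h1 : ¬ ((w ⟨k + (i : ℕ), hb⟩ : Fin n) : ℕ) < k := fun hcon => by
      have := hinvlt _ hcon
      simp only [Equiv.Perm.inv_def, Equiv.symm_apply_apply, Fin.val_mk] at this
      omega
    have h2 := (w ⟨k + (i : ℕ), hb⟩).isLt
    omega⟩
  invFun i := ⟨((w⁻¹ ⟨k + (i : ℕ), by have := i.isLt; omega⟩ : Fin n) : ℕ) - k, by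
    have hb : k + (i : ℕ) < n := by have := i.isLt; omega
    have h1 : ¬ ((w⁻¹ ⟨k + (i : ℕ), hb⟩ : Fin n) : ℕ) < k := fun hcon => by
      have := hlt _ hcon
      simp only [Equiv.Perm.inv_def, Equiv.apply_symm_apply, Fin.val_mk] at this
      omega
    have h2 := (w⁻¹ ⟨k + (i : ℕ), hb⟩).isLt
    omega⟩
  left_inv i := Fin.ext (by
    have hb : k + (i : ℕ) < n := by have := i.isLt; omega
    have h1 : ¬ ((w ⟨k + (i : ℕ), hb⟩ : Fin n) : ℕ) < k := fun hcon => by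
      have := hinvlt _ hcon
      simp only [Equiv.Perm.inv_def, Equiv.symm_apply_apply, Fin.val_mk] at this
      omega
    simp only [Fin.val_mk]
    rw [show (⟨k + (((w ⟨k + (i : ℕ), hb⟩ : Fin n) : ℕ) - k), by
        have := (w ⟨k + (i : ℕ), hb⟩).isLt; omega⟩ : Fin n)
      = w ⟨k + (i : ℕ), hb⟩ from Fin.ext (by simp only [Fin.val_mk]; omega)]
    simp)
  right_inv i := Fin.ext (by
    have hb : k + (i : ℕ) < n := by have := i.isLt; omega
    have h1 : ¬ ((w⁻¹ ⟨k + (i : ℕ), hb⟩ : Fin n) : ℕ) < k := fun hcon => by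
      have := hlt _ hcon
      simp only [Equiv.Perm.inv_def, Equiv.apply_symm_apply, Fin.val_mk] at this
      omega
    simp only [Fin.val_mk]
    rw [show (⟨k + (((w⁻¹ ⟨k + (i : ℕ), hb⟩ : Fin n) : ℕ) - k), by
        have := (w⁻¹ ⟨k + (i : ℕ), hb⟩).isLt; omega⟩ : Fin n)
      = w⁻¹ ⟨k + (i : ℕ), hb⟩ from Fin.ext (by simp only [Fin.val_mk]; omega)]
    simp)

lemma blockU_val {n : ℕ} (w : Equiv.Perm (Fin n)) (k : ℕ) (hkn : k < n)
    (hlt : ∀ i : Fin n, (i : ℕ) < k → ((w i : Fin n) : ℕ) < k)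
    (hinvlt : ∀ i : Fin n, (i : ℕ) < k → ((w⁻¹ i : Fin n) : ℕ) < k) (i : Fin k) :
    ((blockU w k hkn hlt hinvlt i : Fin k) : ℕ)
      = ((w ⟨(i : ℕ), lt_trans i.isLt hkn⟩ : Fin n) : ℕ) := rfl

lemma blockV_val {n : ℕ} (w : Equiv.Perm (Fin n)) (k : ℕ) (hkn : k < n)
    (hlt : ∀ i : Fin n, (i : ℕ) < k → ((w i : Fin n) : ℕ) < k)
    (hinvlt : ∀ i : Fin n, (i : ℕ) < k → ((w⁻¹ i : Fin n) : ℕ) < k) (i : Fin (n - k))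
    (hb : k + (i : ℕ) < n) :
    ((blockV w k hkn hlt hinvlt i : Fin (n - k)) : ℕ)
      = ((w ⟨k + (i : ℕ), hb⟩ : Fin n) : ℕ) - k := rfl

lemma perm_inv_lt {n : ℕ} (w : Equiv.Perm (Fin n)) (k : ℕ)
    (hlt : ∀ i : Fin n, (i : ℕ) < k → ((w i : Fin n) : ℕ) < k) :
    ∀ i : Fin n, (i : ℕ) < k → ((w⁻¹ i : Fin n) : ℕ) < k := by
  classical
  have himg : (Finset.univ.filter fun i : Fin n => (i : ℕ) < k).image w
      = Finset.univ.filter fun i : Fin n => (i : ℕ) < k := by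
    apply Finset.eq_of_subset_of_card_le
    · intro x hx
      rw [Finset.mem_image] at hx
      obtain ⟨j, hj, rfl⟩ := hx
      rw [Finset.mem_filter] at hj ⊢
      exact ⟨Finset.mem_univ _, hlt j hj.2⟩
    · rw [Finset.card_image_of_injective _ w.injective]
  intro i hi
  have : i ∈ (Finset.univ.filter fun i : Fin n => (i : ℕ) < k).image w := by
    rw [himg, Finset.mem_filter]; exact ⟨Finset.mem_univ _, hi⟩
  rw [Finset.mem_image] at this
  obtain ⟨j, hj, rfl⟩ := this
  rw [Finset.mem_filter] at hj
  simpa using hj.2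

lemma perm_ge {n : ℕ} (w : Equiv.Perm (Fin n)) (k : ℕ)
    (hlt : ∀ i : Fin n, (i : ℕ) < k → ((w i : Fin n) : ℕ) < k) :
    ∀ i : Fin n, k ≤ (i : ℕ) → k ≤ ((w i : Fin n) : ℕ) := by
  intro i hi
  by_contra hcon
  have := perm_inv_lt w k hlt (w i) (Nat.not_le.1 hcon)
  simp only [Equiv.Perm.inv_def, Equiv.symm_apply_apply] at this
  omega

lemma block_dsum {n : ℕ} (w : Equiv.Perm (Fin n)) (k : ℕ) (hkn : k < n)
    (hlt : ∀ i : Fin n, (i : ℕ) < k → ((w i : Fin n) : ℕ) < k)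
    (hinvlt : ∀ i : Fin n, (i : ℕ) < k → ((w⁻¹ i : Fin n) : ℕ) < k) :
    dsumSig ⟨k, blockU w k hkn hlt hinvlt⟩ ⟨n - k, blockV w k hkn hlt hinvlt⟩ = ⟨n, w⟩ := by
  show (⟨k + (n - k), _⟩ : Σ m : ℕ, Equiv.Perm (Fin m)) = ⟨n, w⟩
  refine sigma_perm_ext (by omega) _ _ ?_
  intro i him hin
  rcases Nat.lt_or_ge i k with h | h
  · rw [dsum_val_left _ _ h him, blockU_val]
  · rw [dsum_val_right _ _ h him]
    have hb : k + (i - k) < n := by omega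
    have hfk : i - k < n - k := by omega
    have hb2 : k + ((⟨i - k, hfk⟩ : Fin (n - k)) : ℕ) < n := by
      simp only [Fin.val_mk]; omega
    rw [blockV_val w k hkn hlt hinvlt ⟨i - k, hfk⟩ hb2]
    have hval : (⟨k + ((⟨i - k, hfk⟩ : Fin (n - k)) : ℕ), hb2⟩ : Fin n) = ⟨i, hin⟩ :=
      Fin.ext (by simp only [Fin.val_mk]; omega)
    rw [hval]
    have := perm_ge w k hlt ⟨i, hin⟩ h
    omega

lemma blockU_order {n : ℕ} (w : Equiv.Perm (Fin n)) (k : ℕ) (hkn : k < n)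
    (hlt : ∀ i : Fin n, (i : ℕ) < k → ((w i : Fin n) : ℕ) < k)
    (hinvlt : ∀ i : Fin n, (i : ℕ) < k → ((w⁻¹ i : Fin n) : ℕ) < k) (s t : Fin k) :
    blockU w k hkn hlt hinvlt s < blockU w k hkn hlt hinvlt t ↔
      w ⟨(s : ℕ), lt_trans s.isLt hkn⟩ < w ⟨(t : ℕ), lt_trans t.isLt hkn⟩ := by
  rw [Fin.lt_def, blockU_val, blockU_val, Fin.lt_def]

lemma blockV_order {n : ℕ} (w : Equiv.Perm (Fin n)) (k : ℕ) (hkn : k < n)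
    (hlt : ∀ i : Fin n, (i : ℕ) < k → ((w i : Fin n) : ℕ) < k)
    (hinvlt : ∀ i : Fin n, (i : ℕ) < k → ((w⁻¹ i : Fin n) : ℕ) < k) (s t : Fin (n - k))
    (hbs : k + (s : ℕ) < n) (hbt : k + (t : ℕ) < n) :
    blockV w k hkn hlt hinvlt s < blockV w k hkn hlt hinvlt t ↔
      w ⟨k + (s : ℕ), hbs⟩ < w ⟨k + (t : ℕ), hbt⟩ := by
  rw [Fin.lt_def, blockV_val w k hkn hlt hinvlt s hbs, blockV_val w k hkn hlt hinvlt t hbt,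
    Fin.lt_def]
  have h1 := perm_ge w k hlt ⟨k + (s : ℕ), hbs⟩ (Nat.le_add_right _ _)
  have h2 := perm_ge w k hlt ⟨k + (t : ℕ), hbt⟩ (Nat.le_add_right _ _)
  omega
/-- a permutation avoiding 2413, 2431, 3142, 4132 is a direct sum
of 132-avoiding permutations. -/
theorem avoiders_dsum_of_dominant {n : ℕ} (w : Equiv.Perm (Fin n))
    (h1 : ¬ ContainsPattern w p2413) (h2 : ¬ ContainsPattern w p2431)
    (h3 : ¬ ContainsPattern w p3142) (h4 : ¬ ContainsPattern w p4132) :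
    ∃ ws : List (Σ m : ℕ, Equiv.Perm (Fin m)), ws ≠ [] ∧
      (∀ p ∈ ws, ¬ ContainsPattern p.2 p132) ∧ dsumList ws = ⟨n, w⟩ := by
  revert w
  induction n using Nat.strong_induction_on with
  | _ n IH =>
    intro w h1 h2 h3 h4
    by_cases hc : ContainsPattern w p132
    · obtain ⟨k, hk0, hkn, hlt⟩ := core w h1 h2 h3 h4 hc
      have hinvlt := perm_inv_lt w k hlt
      have hgu : StrictMono (fun s : Fin k => (⟨(s : ℕ), lt_trans s.isLt hkn⟩ : Fin n)) :=
        fun a b hab => by simp only [Fin.mk_lt_mk]; exact hab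
      have hgv : StrictMono
          (fun s : Fin (n - k) => (⟨k + (s : ℕ), by have := s.isLt; omega⟩ : Fin n)) :=
        fun a b hab => by
          simp only [Fin.mk_lt_mk]
          have : (a : ℕ) < b := hab
          omega
      have hUiff := fun s t => blockU_order w k hkn hlt hinvlt s t
      have hViff := fun s t => blockV_order w k hkn hlt hinvlt s t
        (by have := s.isLt; omega) (by have := t.isLt; omega)
      obtain ⟨l1, hne1, hav1, hsum1⟩ := IH k hkn (blockU w k hkn hlt hinvlt)
        (fun hcc => h1 (contains_mono _ w _ hgu hUiff _ hcc))
        (fun hcc => h2 (contains_mono _ w _ hgu hUiff _ hcc))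
        (fun hcc => h3 (contains_mono _ w _ hgu hUiff _ hcc))
        (fun hcc => h4 (contains_mono _ w _ hgu hUiff _ hcc))
      obtain ⟨l2, hne2, hav2, hsum2⟩ := IH (n - k) (by omega) (blockV w k hkn hlt hinvlt)
        (fun hcc => h1 (contains_mono _ w _ hgv hViff _ hcc))
        (fun hcc => h2 (contains_mono _ w _ hgv hViff _ hcc))
        (fun hcc => h3 (contains_mono _ w _ hgv hViff _ hcc))
        (fun hcc => h4 (contains_mono _ w _ hgv hViff _ hcc))
      refine ⟨l1 ++ l2, by simp [hne1], ?_, ?_⟩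
      · intro p hp
        rcases List.mem_append.1 hp with h | h
        exacts [hav1 p h, hav2 p h]
      · rw [dsumList_append, hsum1, hsum2]
        exact block_dsum w k hkn hlt hinvlt
    · refine ⟨[⟨n, w⟩], by simp, ?_, ?_⟩
      · intro p hp
        simp only [List.mem_singleton] at hp
        subst hp
        exact hc
      · exact dsumSig_zero_right _
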